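/- Let R be a left Noetherian ring and n ≥ 1. If S is a subring of the matrix ring M_n(R) containing all scalar matrices rI with r ∈ R, then S ∩ U(M_n(R)) = U(S); that is, every matrix in S invertible in M_n(R) has its inverse in S. -/
import Mathlib


/-- Let `R` be a left Noetherian ring and `n ≥ 1`. If `S` is a subring of `Mₙ(R)`
containing all scalar matrices `r • I` with `r ∈ R`, then every matrix in `S` invertible
in `Mₙ(R)` has its inverse in `S` (i.e. `S ∩ U(Mₙ(R)) = U(S)`). -/
theorem stmt_5 {R : Type*} [Ring R] [IsNoetherianRing R]
    (n : ℕ) (hn : 1 ≤ n)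
    (S : Subring (Matrix (Fin n) (Fin n) R))
    (hscal : ∀ r : R, r • (1 : Matrix (Fin n) (Fin n) R) ∈ S)
    (A : (Matrix (Fin n) (Fin n) R)ˣ) (hA : A.val ∈ S) :
    (A⁻¹).val ∈ S := by
  set B : Matrix (Fin n) (Fin n) R := (A⁻¹).val with hB
  have hsmul : ∀ (r : R) (x : Matrix (Fin n) (Fin n) R), x ∈ S → r • x ∈ S := by
    intro r x hx
    have h : r • x = (r • (1 : Matrix (Fin n) (Fin n) R)) * x := by
      rw [Matrix.smul_mul, one_mul]
    rw [h]
    exact S.mul_mem (hscal r) hx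
  -- powers of B⁻¹... chain of spans
  let N : ℕ →o Submodule R (Matrix (Fin n) (Fin n) R) :=
    ⟨fun k => Submodule.span R ((fun i => B ^ i) '' Set.Iic k), by
      intro a b hab
      exact Submodule.span_mono (Set.image_mono (Set.Iic_subset_Iic.mpr hab))⟩
  have hNoeth : IsNoetherian R (Matrix (Fin n) (Fin n) R) := inferInstance
  obtain ⟨m, hm⟩ := monotone_stabilizes_iff_noetherian.mpr hNoeth N
  have hBmem : B ^ (m + 1) ∈ N m := by
    rw [hm (m + 1) (Nat.le_succ m)]
    exact Submodule.subset_span ⟨m + 1, Set.mem_Iic.mpr le_rfl, rfl⟩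
  -- powers cancel
  have hpowcancel : ∀ i : ℕ, B ^ i * A.val ^ i = 1 := by
    intro i
    rw [hB, ← Units.val_pow_eq_pow_val, ← Units.val_pow_eq_pow_val, ← Units.val_mul,
      inv_pow, inv_mul_cancel, Units.val_one]
  have key : ∀ X ∈ N m, X * A.val ^ m ∈ S := by
    intro X hX
    refine Submodule.span_induction ?_ ?_ ?_ ?_ hX
    · rintro x ⟨i, hi, rfl⟩
      have hi' : i ≤ m := hi
      have hdecomp : A.val ^ m = A.val ^ i * A.val ^ (m - i) := by
        rw [← pow_add, Nat.add_sub_cancel' hi']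
      rw [hdecomp, ← mul_assoc, hpowcancel i, one_mul]
      exact S.pow_mem hA _
    · simpa using S.zero_mem
    · intro x y _ _ hx hy
      rw [add_mul]
      exact S.add_mem hx hy
    · intro r x _ hx
      rw [Matrix.smul_mul]
      exact hsmul r _ hx
  have hfinal : B ^ (m + 1) * A.val ^ m = B := by
    rw [pow_succ', mul_assoc, hpowcancel m, mul_one]
  have := key _ hBmem
  rwa [hfinal] at this
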